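/- arXiv:1801.02066 — 2 statements merged into one kernel-verified Lean document; each statement's English description precedes it below -/
import Mathlib

section
/- Given positive integers d_1,...,d_n with Σ d_i even, consider the instance of P0 with n blocks, two services k_ell and k_c, rates r_{b,k_ell} = r_{b,k_c} = d_b for all b, demand q_{k_ell} = (Σ d_i)/2, and each block consisting of a distinct single basic unit. Then there exists a partition of {1,...,n} into two subsets each summing to (Σ d_i)/2 if and only if this instance of P0 has a feasible solution with objective value at least (Σ d_i)/2. -/
/-- Partition reduction instance of P0: `n` blocks, each consisting of a
distinct single basic unit (so `a b i = if b = i then 1 else 0`), two services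
(k_ell = `true`, k_c = `false`) with rates `r b k = d b`, and demand
`q = (∑ d i)/2` for k_ell.  There exists an equal-sum partition of
`{1,…,n}` iff this P0 instance has a feasible solution with objective value at
least `(∑ d i)/2`.  (All inequalities with `(∑ d i)/2` are stated multiplied
by 2 to stay in ℕ.) -/
theorem partition_reduction (n : ℕ) (d : Fin n → ℕ) (heven : Even (∑ i, d i)) :
    (∃ T : Finset (Fin n), 2 * ∑ i ∈ T, d i = ∑ i, d i) ↔
    (∃ x : Fin n → Bool → ℕ,
      (∀ b k, x b k ≤ 1) ∧
      (∑ i, d i ≤ 2 * ∑ b, d b * x b true) ∧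
      (∀ i : Fin n, ∑ k : Bool, ∑ b, (if b = i then 1 else 0) * x b k ≤ 1) ∧
      (∑ i, d i ≤ 2 * ∑ b, d b * x b false)) := by
  constructor
  · rintro ⟨T, hT⟩
    refine ⟨fun b k => cond k (if b ∈ T then 1 else 0) (if b ∈ T then 0 else 1),
      ?_, ?_, ?_, ?_⟩
    · intro b k; cases k <;> dsimp <;> split <;> simp
    · have h1 : ∑ b, d b * (if b ∈ T then 1 else 0) = ∑ i ∈ T, d i := by
        simp [mul_ite, Finset.sum_ite_mem]
      simpa [h1] using hT.ge
    · intro i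
      rw [Fintype.sum_bool]
      have e : ∀ g : Fin n → ℕ, ∑ b, (if b = i then 1 else 0) * g b = g i := by
        intro g
        rw [Finset.sum_eq_single i]
        · simp
        · intro b _ hb; simp [hb]
        · simp
      rw [e, e]
      by_cases h : i ∈ T <;> simp [h]
    · have h12 : (∑ b, d b * (if b ∈ T then 1 else 0))
          + (∑ b, d b * (if b ∈ T then 0 else 1)) = ∑ i, d i := by
        rw [← Finset.sum_add_distrib]
        apply Finset.sum_congr rfl
        intro b _
        split <;> ring
      have h1 : ∑ b, d b * (if b ∈ T then 1 else 0) = ∑ i ∈ T, d i := by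
        simp [mul_ite, Finset.sum_ite_mem]
      simp only [Bool.cond_false]
      omega
  · rintro ⟨x, hx1, htrue, hone, hfalse⟩
    refine ⟨Finset.univ.filter (fun b => x b true = 1), ?_⟩
    have hkey : ∀ i : Fin n, x i true + x i false ≤ 1 := by
      intro i
      have h := hone i
      rw [Fintype.sum_bool] at h
      have e : ∀ k : Bool, ∑ b, (if b = i then 1 else 0) * x b k = x i k := by
        intro k
        rw [Finset.sum_eq_single i]
        · simp
        · intro b _ hb; simp [hb]
        · simp
      rw [e true, e false] at h
      omega
    have hS : ∑ b, d b * x b true + ∑ b, d b * x b false ≤ ∑ i, d i := by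
      rw [← Finset.sum_add_distrib]
      apply Finset.sum_le_sum
      intro i _
      nlinarith [hkey i]
    have hT : ∑ i ∈ Finset.univ.filter (fun b => x b true = 1), d i
        = ∑ b, d b * x b true := by
      rw [Finset.sum_filter]
      apply Finset.sum_congr rfl
      intro b _
      have hb := hx1 b true
      interval_cases h : x b true <;> simp
    omega
end

section
/- In the Partition reduction instance of P0, any feasible solution satisfies objective value ≤ (Σ_{i=1}^n d_i)/2, with equality attainable exactly when the multiset {d_1,...,d_n} admits an equal-sum partition. -/
/-- In the Partition-reduction instance of P0 (n blocks each a distinct single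
basic unit, services k_ell = `true` and k_c = `false`, rates `d b`, demand
`(∑ d)/2`), every feasible solution has objective value at most `(∑ d)/2`,
and a feasible solution attaining `(∑ d)/2` exists iff `{d_1,…,d_n}` admits
an equal-sum partition.  (Inequalities with `(∑ d)/2` are multiplied by 2.) -/
theorem partition_instance_bound (n : ℕ) (d : Fin n → ℕ) (hpos : ∀ i, 0 < d i)
    (heven : Even (∑ i, d i)) :
    (∀ x : Fin n → Bool → ℕ,
      (∀ b k, x b k ≤ 1) →
      (∑ i, d i ≤ 2 * ∑ b, d b * x b true) →
      (∀ b, x b true + x b false ≤ 1) →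
      2 * ∑ b, d b * x b false ≤ ∑ i, d i) ∧
    ((∃ x : Fin n → Bool → ℕ,
        (∀ b k, x b k ≤ 1) ∧
        (∑ i, d i ≤ 2 * ∑ b, d b * x b true) ∧
        (∀ b, x b true + x b false ≤ 1) ∧
        2 * ∑ b, d b * x b false = ∑ i, d i) ↔
      ∃ T : Finset (Fin n), 2 * ∑ i ∈ T, d i = ∑ i, d i) := by
  have key : ∀ x : Fin n → Bool → ℕ, (∀ b, x b true + x b false ≤ 1) →
      (∑ b, d b * x b true) + (∑ b, d b * x b false) ≤ ∑ i, d i := by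
    intro x hx
    rw [← Finset.sum_add_distrib]
    apply Finset.sum_le_sum
    intro i _
    have := hx i
    nlinarith [hpos i]
  constructor
  · intro x _ h2 h3
    have := key x h3
    omega
  · constructor
    · rintro ⟨x, h1, h2, h3, h4⟩
      refine ⟨Finset.univ.filter (fun b => x b false = 1), ?_⟩
      rw [Finset.sum_filter]
      have : ∀ b, (if x b false = 1 then d b else 0) = d b * x b false := by
        intro b
        have := h1 b false
        interval_cases h : x b false <;> simp
      simp only [this]
      exact h4
    · rintro ⟨T, hT⟩
      refine ⟨fun b k => if (b ∈ T) = (k = false) then 1 else 0, ?_, ?_, ?_, ?_⟩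
      · intro b k; simp only []; split <;> simp
      · have : ∑ b, d b * (if (b ∈ T) = (true = false) then 1 else 0)
            = ∑ b ∈ Finset.univ.filter (fun b => b ∉ T), d b := by
          rw [Finset.sum_filter]
          apply Finset.sum_congr rfl
          intro b _
          by_cases hb : b ∈ T <;> simp [hb]
        rw [this]
        have hsplit : ∑ b ∈ Finset.univ.filter (fun b => b ∉ T), d b
            + ∑ i ∈ T, d i = ∑ i, d i := by
          rw [add_comm, ← Finset.sum_filter_add_sum_filter_not Finset.univ (fun b => b ∈ T) d]
          congr 1
          apply Finset.sum_congr _ (fun _ _ => rfl)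
          ext b; simp
        omega
      · intro b; by_cases hb : b ∈ T <;> simp [hb]
      · have : ∑ b, d b * (if (b ∈ T) = (false = false) then 1 else 0) = ∑ i ∈ T, d i := by
          rw [show (∑ i ∈ T, d i) = ∑ b ∈ Finset.univ.filter (· ∈ T), d b by
            congr 1; ext b; simp]
          rw [Finset.sum_filter]
          apply Finset.sum_congr rfl
          intro b _
          by_cases hb : b ∈ T <;> simp [hb]
        rw [this, hT]
end
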